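/- A deterministic voting rule φ is robust (for every probability distribution p on {-1,1}^n, there exists i with rᵢ(φ,p) > 1/2) if and only if φ is a weighted majority rule with nonnegative weights having no ties, i.e., there exists w ∈ ℝ₊^n, w ≠ 0, with φ(x)·∑ᵢ wᵢxᵢ > 0 for all x. -/

import Mathlib

open Finset

/-- The real value of a ±1 vote encoded as a `Bool` (`true ↦ 1`, `false ↦ -1`). -/
def sg (b : Bool) : ℝ := if b then 1 else -1

/-- Responsiveness of individual `i` under rule `φ` and distribution `p`. -/
def resp {n : ℕ} (φ : (Fin n → Bool) → Bool) (p : (Fin n → Bool) → ℝ) (i : Fin n) : ℝ :=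
  ∑ x : Fin n → Bool, if φ x = x i then p x else 0

/-- `p` is a probability distribution on profiles. -/
def IsProb {n : ℕ} (p : (Fin n → Bool) → ℝ) : Prop :=
  (∀ x, 0 ≤ p x) ∧ ∑ x : Fin n → Bool, p x = 1

lemma sg_mul_sg (a b : Bool) : sg a * sg b = if a = b then 1 else -1 := by
  cases a <;> cases b <;> simp [sg]

lemma key_identity {n : ℕ} (φ : (Fin n → Bool) → Bool) (p : (Fin n → Bool) → ℝ) (i : Fin n) :
    ∑ x : Fin n → Bool, p x * (sg (φ x) * sg (x i))
      = 2 * resp φ p i - ∑ x : Fin n → Bool, p x := by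
  rw [resp, Finset.mul_sum, ← Finset.sum_sub_distrib]
  apply Finset.sum_congr rfl
  intro x _
  rw [sg_mul_sg]
  by_cases h : φ x = x i <;> simp [h] <;> ring

/-- `φ` is robust iff it is a WMR with nonnegative weights and no ties. -/
theorem stmt_9 (n : ℕ) (φ : (Fin n → Bool) → Bool) :
    (∀ p, IsProb p → ∃ i, (1 : ℝ) / 2 < resp φ p i) ↔
    (∃ w : Fin n → ℝ, (∀ i, 0 ≤ w i) ∧ w ≠ 0 ∧
        ∀ x, 0 < sg (φ x) * ∑ i, w i * sg (x i)) := by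
  constructor
  · -- robust → WMR
    intro hrob
    -- the vectors v x
    set v : (Fin n → Bool) → (Fin n → ℝ) := fun x i => sg (φ x) * sg (x i) with hv
    -- the linear map T
    let T : ((Fin n → Bool) → ℝ) →ₗ[ℝ] (Fin n → ℝ) :=
      { toFun := fun p i => ∑ x : Fin n → Bool, p x * v x i
        map_add' := by
          intro p q; funext i; simp [add_mul, Finset.sum_add_distrib]
        map_smul' := by
          intro c p; funext i
          simp [Finset.mul_sum, mul_assoc] }
    set C : Set (Fin n → ℝ) := T '' (stdSimplex ℝ (Fin n → Bool)) with hC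
    set K : Set (Fin n → ℝ) := {u | ∀ i, u i ≤ 0} with hKdef
    have hCconv : Convex ℝ C := (convex_stdSimplex ℝ _).linear_image T
    have hCcomp : IsCompact C :=
      (isCompact_stdSimplex ℝ _).image T.continuous_of_finiteDimensional
    have hKconv : Convex ℝ K := by
      intro u hu y hy a b ha hb _ i
      have h1 := hu i; have h2 := hy i
      have : a * u i + b * y i ≤ 0 := by nlinarith
      simpa using this
    have hKclosed : IsClosed K := by
      have : K = ⋂ i, {u : Fin n → ℝ | u i ≤ 0} := by
        ext u; simp [hKdef, Set.mem_iInter]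
      rw [this]
      exact isClosed_iInter fun i => isClosed_le (continuous_apply i) continuous_const
    have hdisj : Disjoint K C := by
      rw [Set.disjoint_right]
      rintro u ⟨p, hp, rfl⟩ hK
      have hprob : IsProb p := ⟨hp.1, hp.2⟩
      obtain ⟨i, hi⟩ := hrob p hprob
      have hTi : T p i = 2 * resp φ p i - 1 := by
        show (∑ x : Fin n → Bool, p x * v x i) = _
        rw [hv]
        rw [key_identity φ p i, hprob.2]
      have : (0:ℝ) < T p i := by rw [hTi]; linarith
      exact absurd (hK i) (not_le.mpr this)
    obtain ⟨f, u₀, v₀, hfK, huv, hfC⟩ :=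
      geometric_hahn_banach_closed_compact hKconv hKclosed hCconv hCcomp hdisj
    -- basis vectors
    set e : Fin n → (Fin n → ℝ) := fun i j => if i = j then 1 else 0 with he
    set w : Fin n → ℝ := fun i => f (e i) with hw
    have h0K : (0 : Fin n → ℝ) ∈ K := fun i => le_refl 0
    have hu0 : 0 < u₀ := by have := hfK 0 h0K; simpa using this
    -- f expansion
    have hexp : ∀ y : Fin n → ℝ, f y = ∑ i, y i * w i := by
      intro y
      conv_lhs => rw [pi_eq_sum_univ y]
      rw [map_sum]
      apply Finset.sum_congr rfl
      intro i _
      rw [map_smul]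
      simp [hw, he, smul_eq_mul]
    -- w nonneg
    have hwnn : ∀ i, 0 ≤ w i := by
      intro i
      by_contra hneg
      push_neg at hneg
      set c : ℝ := (u₀ + 1) / w i with hc
      have hcneg : c ≤ 0 := le_of_lt (div_neg_of_pos_of_neg (by linarith) hneg)
      have hmem : (c • e i) ∈ K := by
        intro j
        by_cases h : i = j <;> simp [he, h, hcneg]
      have := hfK _ hmem
      rw [map_smul, smul_eq_mul] at this
      have hfe : f (e i) = w i := rfl
      rw [hfe, hc, div_mul_cancel₀ _ (ne_of_lt hneg)] at this
      linarith
    -- each v x in C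
    have hvC : ∀ x : Fin n → Bool, v x ∈ C := by
      intro x
      refine ⟨fun y => if y = x then 1 else 0, ⟨?_, ?_⟩, ?_⟩
      · intro y; by_cases h : y = x <;> simp [h]
      · simp
      · funext i
        show (∑ y : Fin n → Bool, (if y = x then (1:ℝ) else 0) * v y i) = v x i
        rw [Finset.sum_eq_single x]
        · simp
        · intro y _ hy; simp [hy]
        · intro h; exact absurd (Finset.mem_univ x) h
    have hpos : ∀ x : Fin n → Bool, 0 < sg (φ x) * ∑ i, w i * sg (x i) := by
      intro x
      have h1 := hfC _ (hvC x)
      rw [hexp] at h1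
      have : (∑ i, v x i * w i) = sg (φ x) * ∑ i, w i * sg (x i) := by
        rw [Finset.mul_sum]
        apply Finset.sum_congr rfl
        intro i _; simp [hv]; ring
      rw [this] at h1
      linarith
    refine ⟨w, hwnn, ?_, hpos⟩
    -- w ≠ 0
    intro hw0
    have x₀ : Fin n → Bool := fun _ => true
    have h1 := hpos x₀
    have h2 : sg (φ x₀) * ∑ i, w i * sg (x₀ i) = 0 := by
      have : ∀ i, w i = 0 := fun i => congrFun hw0 i
      simp [this]
    rw [h2] at h1
    exact lt_irrefl 0 h1
  · -- WMR → robust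
    rintro ⟨w, hwnn, hwne, hpos⟩ p ⟨hp0, hp1⟩
    -- S = ∑ i, w i * (2 * resp - 1) > 0
    have hS : 0 < ∑ i, w i * (2 * resp φ p i - 1) := by
      have hrw : ∀ i, w i * (2 * resp φ p i - 1)
          = ∑ x : Fin n → Bool, w i * (p x * (sg (φ x) * sg (x i))) := by
        intro i
        rw [← Finset.mul_sum, key_identity φ p i, hp1]
      calc (0:ℝ) < ∑ x : Fin n → Bool, p x * (sg (φ x) * ∑ i, w i * sg (x i)) := by
            obtain ⟨x₀, hx₀⟩ : ∃ x : Fin n → Bool, 0 < p x := by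
              by_contra h
              push_neg at h
              have : ∑ x : Fin n → Bool, p x = 0 :=
                Finset.sum_eq_zero fun x _ => le_antisymm (h x) (hp0 x)
              rw [hp1] at this; norm_num at this
            have hterm : ∀ x ∈ Finset.univ (α := Fin n → Bool),
                0 ≤ p x * (sg (φ x) * ∑ i, w i * sg (x i)) :=
              fun x _ => mul_nonneg (hp0 x) (le_of_lt (hpos x))
            calc (0:ℝ) < p x₀ * (sg (φ x₀) * ∑ i, w i * sg (x₀ i)) :=
                  mul_pos hx₀ (hpos x₀)
              _ ≤ _ := Finset.single_le_sum hterm (Finset.mem_univ x₀)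
        _ = ∑ i, w i * (2 * resp φ p i - 1) := by
            simp_rw [hrw]
            rw [Finset.sum_comm]
            apply Finset.sum_congr rfl
            intro x _
            simp only [Finset.mul_sum]
            apply Finset.sum_congr rfl
            intro i _
            ring
    obtain ⟨i, hi⟩ : ∃ i, 0 < w i * (2 * resp φ p i - 1) := by
      by_contra h
      push_neg at h
      have : ∑ i, w i * (2 * resp φ p i - 1) ≤ 0 :=
        Finset.sum_nonpos fun i _ => h i
      linarith
    refine ⟨i, ?_⟩
    have hwi := hwnn i
    nlinarith
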